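/- Intermediate multiplier estimate in the proof of Theorem 2.3 (equation (2.19)): Suppose (u, λ) ∈ V × L solves the continuous problem and (u_h, λ_h) ∈ V_h × Λ_h solves the stabilised discrete problem with the same right-hand side F. Then there exists a constant C > 0, depending only on the constants of the framework, such that for every ν_h ∈ Λ_h, setting ζ_h := λ_h − ν_h, one has ‖ζ_h‖_L ≤ C · ( ‖λ − ν_h‖_L + ‖u − u_h‖_V + s(ζ_h, ζ_h)^{1/2} ). -/
import Mathlib


/-- **Intermediate multiplier estimate in the proof of Theorem 2.3 (equation (2.19)).**
With `ζ_h := λ_h − ν_h`, one has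
`‖ζ_h‖_L ≤ C (‖λ − ν_h‖_L + ‖u − u_h‖_V + s(ζ_h,ζ_h)^{1/2})`
for every `ν_h ∈ Λ_h`, with `C` depending only on the constants of the framework. -/
theorem intermediate_multiplier_estimate
    {V L : Type*} [NormedAddCommGroup V] [NormedSpace ℝ V]
    [NormedAddCommGroup L] [NormedSpace ℝ L]
    -- bilinear forms and their continuity
    (a : V →ₗ[ℝ] V →ₗ[ℝ] ℝ) (b : L →ₗ[ℝ] V →ₗ[ℝ] ℝ)
    (Ma : ℝ) (hMa : 0 < Ma)
    (ha_cont : ∀ u v : V, |a u v| ≤ Ma * ‖u‖ * ‖v‖)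
    (Mb : ℝ) (hMb : 0 < Mb)
    (hb_cont : ∀ (lam : L) (v : V), |b lam v| ≤ Mb * ‖lam‖ * ‖v‖)
    -- continuous inf-sup condition
    (β : ℝ) (hβ : 0 < β)
    (h_infsup : ∀ lam : L, β * ‖lam‖ ≤ ⨆ v : {v : V // v ≠ 0}, b lam v.1 / ‖v.1‖)
    -- discrete subspaces
    (Vh : Submodule ℝ V) (Lh Λh : Submodule ℝ L)
    -- discrete norm on V_h
    (nVh : V → ℝ) (CV : ℝ) (hCV : 0 < CV)
    (hnVh_nonneg : ∀ v ∈ Vh, 0 ≤ nVh v)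
    (hnVh_def : ∀ v ∈ Vh, nVh v = 0 → v = 0)
    (hnVh_add : ∀ v ∈ Vh, ∀ w ∈ Vh, nVh (v + w) ≤ nVh v + nVh w)
    (hnVh_smul : ∀ (r : ℝ), ∀ v ∈ Vh, nVh (r • v) = |r| * nVh v)
    (hV_comp : ∀ v ∈ Vh, ‖v‖ ≤ CV * nVh v)
    -- discrete norm on L_h + Λ_h
    (nLh : L → ℝ)
    (hnLh_nonneg : ∀ x ∈ Lh ⊔ Λh, 0 ≤ nLh x)
    (hnLh_def : ∀ x ∈ Lh ⊔ Λh, nLh x = 0 → x = 0)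
    (hnLh_add : ∀ x ∈ Lh ⊔ Λh, ∀ y ∈ Lh ⊔ Λh, nLh (x + y) ≤ nLh x + nLh y)
    (hnLh_smul : ∀ (r : ℝ), ∀ x ∈ Lh ⊔ Λh, nLh (r • x) = |r| * nLh x)
    -- Fortin operator
    (πF : V →ₗ[ℝ] V) (hπF_mem : ∀ v : V, πF v ∈ Vh)
    (hπF_orth : ∀ μ ∈ Lh, ∀ v : V, b μ (v - πF v) = 0)
    (CF : ℝ) (hCF : 0 < CF)
    (hπF_stab : ∀ v : V, ‖πF v‖ ≤ CF * ‖v‖)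
    -- stabilising projection π_L : Λ_h → L_h
    (πL : L →ₗ[ℝ] L) (hπL_mem : ∀ x ∈ Λh, πL x ∈ Lh)
    (Cπ : ℝ) (hCπ : 0 < Cπ)
    (hπL_cont : ∀ x ∈ Λh, ∀ v : V, |b (x - πL x) v| ≤ Cπ * nLh (x - πL x) * ‖v‖)
    -- stabilisation form
    (s : L →ₗ[ℝ] L →ₗ[ℝ] ℝ)
    (hs_symm : ∀ x ∈ Λh, ∀ y ∈ Λh, s x y = s y x)
    (hs_pos : ∀ x ∈ Λh, 0 ≤ s x x)
    (Cs : ℝ) (hCs : 0 < Cs)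
    (hs_stab : ∀ x ∈ Λh, nLh (x - πL x) ^ 2 ≤ Cs * s x x) :
    ∃ C > 0, ∀ (F : V →L[ℝ] ℝ) (u : V) (lam : L) (uh : V) (lamh : L),
      uh ∈ Vh → lamh ∈ Λh →
      -- continuous problem
      (∀ (v : V) (μ : L), a u v + b lam v + b μ u = F v) →
      -- stabilised discrete problem
      (∀ v ∈ Vh, ∀ μ ∈ Λh, a uh v + b lamh v + b μ uh - s lamh μ = F v) →
      ∀ ν ∈ Λh,
        ‖lamh - ν‖ ≤
          C * (‖lam - ν‖ + ‖u - uh‖ +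
            Real.sqrt (s (lamh - ν) (lamh - ν))) := by
  refine ⟨(Ma * CF + Mb * CF + Cπ * (1 + CF) * Real.sqrt Cs) / β, ?_, ?_⟩
  · apply div_pos _ hβ
    have h1 : 0 < Real.sqrt Cs := Real.sqrt_pos.mpr hCs
    positivity
  intro F u lam uh lamh huh hlamh hcont hdisc ν hν
  set ζ : L := lamh - ν with hζ
  have hζΛ : ζ ∈ Λh := sub_mem hlamh hν
  set n : ℝ := nLh (ζ - πL ζ) with hn
  have hn_nonneg : 0 ≤ n := hnLh_nonneg _
    (sub_mem (Submodule.mem_sup_right hζΛ) (Submodule.mem_sup_left (hπL_mem _ hζΛ)))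
  have hs_nonneg : 0 ≤ (s ζ) ζ := hs_pos _ hζΛ
  have hn_le : n ≤ Real.sqrt Cs * Real.sqrt ((s ζ) ζ) := by
    rw [← Real.sqrt_mul hCs.le]
    calc n = Real.sqrt (n ^ 2) := by rw [Real.sqrt_sq hn_nonneg]
      _ ≤ Real.sqrt (Cs * s ζ ζ) := Real.sqrt_le_sqrt (hs_stab _ hζΛ)
  -- key error identity for test functions in V_h
  have herr : ∀ v : V, b (lamh - lam) (πF v) = a (u - uh) (πF v) := by
    intro v
    have hc := hcont (πF v) 0
    have hd := hdisc (πF v) (hπF_mem v) 0 (zero_mem Λh)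
    simp only [map_zero, LinearMap.zero_apply] at hc hd
    have : a u (πF v) + b lam (πF v) = a uh (πF v) + b lamh (πF v) := by
      linarith
    simp only [map_sub, LinearMap.sub_apply]
    linarith
  set K : ℝ := Ma * CF * ‖u - uh‖ + Mb * CF * ‖lam - ν‖ + Cπ * (1 + CF) * n with hK
  have hK_nonneg : 0 ≤ K := by positivity
  -- bound the supremum
  have hsup : ∀ v : V, v ≠ 0 → b ζ v / ‖v‖ ≤ K := by
    intro v hv
    have hvpos : (0:ℝ) < ‖v‖ := norm_pos_iff.mpr hv
    rw [div_le_iff₀ hvpos]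
    -- decompose b ζ v
    have hdecomp : b ζ v = b (ζ - πL ζ) v - b (ζ - πL ζ) (πF v)
        + a (u - uh) (πF v) + b (lam - ν) (πF v) := by
      have hf : b (πL ζ) (v - πF v) = 0 := hπF_orth _ (hπL_mem _ hζΛ) v
      have h1 : b ζ v = b (ζ - πL ζ) v + b (πL ζ) v := by
        simp only [map_sub, LinearMap.sub_apply]; ring
      have h2 : b (πL ζ) v = b (πL ζ) (πF v) := by
        have := hf; rw [map_sub] at this; linarith
      have h3 : b (πL ζ) (πF v) = b ζ (πF v) - b (ζ - πL ζ) (πF v) := by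
        simp only [map_sub, LinearMap.sub_apply]; ring
      have h4 : b ζ (πF v) = b (lamh - lam) (πF v) + b (lam - ν) (πF v) := by
        simp only [hζ, map_sub, LinearMap.sub_apply]; ring
      rw [h1, h2, h3, h4, herr v]; ring
    have hπFnorm : ‖πF v‖ ≤ CF * ‖v‖ := hπF_stab v
    have e1 : |b (ζ - πL ζ) v| ≤ Cπ * n * ‖v‖ := hπL_cont _ hζΛ v
    have e2 : |b (ζ - πL ζ) (πF v)| ≤ Cπ * n * (CF * ‖v‖) := by
      calc |b (ζ - πL ζ) (πF v)| ≤ Cπ * n * ‖πF v‖ := hπL_cont _ hζΛ _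
        _ ≤ Cπ * n * (CF * ‖v‖) := by
          apply mul_le_mul_of_nonneg_left hπFnorm (by positivity)
    have e3 : |a (u - uh) (πF v)| ≤ Ma * ‖u - uh‖ * (CF * ‖v‖) := by
      calc |a (u - uh) (πF v)| ≤ Ma * ‖u - uh‖ * ‖πF v‖ := ha_cont _ _
        _ ≤ Ma * ‖u - uh‖ * (CF * ‖v‖) := by
          apply mul_le_mul_of_nonneg_left hπFnorm (by positivity)
    have e4 : |b (lam - ν) (πF v)| ≤ Mb * ‖lam - ν‖ * (CF * ‖v‖) := by
      calc |b (lam - ν) (πF v)| ≤ Mb * ‖lam - ν‖ * ‖πF v‖ := hb_cont _ _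
        _ ≤ Mb * ‖lam - ν‖ * (CF * ‖v‖) := by
          apply mul_le_mul_of_nonneg_left hπFnorm (by positivity)
    calc b ζ v ≤ |b (ζ - πL ζ) v| + |b (ζ - πL ζ) (πF v)|
        + |a (u - uh) (πF v)| + |b (lam - ν) (πF v)| := by
          rw [hdecomp]
          have := abs_le.mp (le_refl |b (ζ - πL ζ) v|)
          have g1 := neg_abs_le (b (ζ - πL ζ) (πF v))
          have g2 := le_abs_self (b (ζ - πL ζ) v)
          have g3 := le_abs_self (a (u - uh) (πF v))
          have g4 := le_abs_self (b (lam - ν) (πF v))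
          linarith
      _ ≤ Cπ * n * ‖v‖ + Cπ * n * (CF * ‖v‖) + Ma * ‖u - uh‖ * (CF * ‖v‖)
          + Mb * ‖lam - ν‖ * (CF * ‖v‖) := by linarith
      _ = K * ‖v‖ := by rw [hK]; ring
  have hβζ : β * ‖ζ‖ ≤ K :=
    le_trans (h_infsup ζ) (Real.iSup_le (fun v => hsup v.1 v.2) hK_nonneg)
  have hζle : ‖ζ‖ ≤ K / β := by
    rw [le_div_iff₀ hβ]; linarith [hβζ]
  refine le_trans hζle ?_
  rw [div_le_iff₀ hβ, div_mul_eq_mul_div, div_mul_cancel₀ _ hβ.ne']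
  have hsq : 0 ≤ Real.sqrt (s ζ ζ) := Real.sqrt_nonneg _
  have hsqCs : 0 ≤ Real.sqrt Cs := Real.sqrt_nonneg _
  have t1 : Ma * CF * ‖u - uh‖ ≤ Ma * CF * (‖lam - ν‖ + ‖u - uh‖ + Real.sqrt (s ζ ζ)) := by
    apply mul_le_mul_of_nonneg_left _ (by positivity)
    linarith [norm_nonneg (lam - ν)]
  have t2 : Mb * CF * ‖lam - ν‖ ≤ Mb * CF * (‖lam - ν‖ + ‖u - uh‖ + Real.sqrt (s ζ ζ)) := by
    apply mul_le_mul_of_nonneg_left _ (by positivity)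
    linarith [norm_nonneg (u - uh)]
  have t3 : Cπ * (1 + CF) * n
      ≤ Cπ * (1 + CF) * Real.sqrt Cs * (‖lam - ν‖ + ‖u - uh‖ + Real.sqrt (s ζ ζ)) := by
    calc Cπ * (1 + CF) * n ≤ Cπ * (1 + CF) * (Real.sqrt Cs * Real.sqrt (s ζ ζ)) :=
          mul_le_mul_of_nonneg_left hn_le (by positivity)
      _ ≤ Cπ * (1 + CF) * Real.sqrt Cs * (‖lam - ν‖ + ‖u - uh‖ + Real.sqrt (s ζ ζ)) := by
          rw [← mul_assoc]
          apply mul_le_mul_of_nonneg_left _ (by positivity)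
          linarith [norm_nonneg (lam - ν), norm_nonneg (u - uh)]
  calc K ≤ Ma * CF * (‖lam - ν‖ + ‖u - uh‖ + Real.sqrt (s ζ ζ))
        + Mb * CF * (‖lam - ν‖ + ‖u - uh‖ + Real.sqrt (s ζ ζ))
        + Cπ * (1 + CF) * Real.sqrt Cs * (‖lam - ν‖ + ‖u - uh‖ + Real.sqrt (s ζ ζ)) := by
        rw [hK]; linarith
    _ = (Ma * CF + Mb * CF + Cπ * (1 + CF) * Real.sqrt Cs)
        * (‖lam - ν‖ + ‖u - uh‖ + Real.sqrt (s ζ ζ)) := by ring
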